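/- Let X > 0, let Y ~ Poisson(X), let α > 0, and define the truncated random variable Ȳ by: Ȳ = Y if X/α ≤ Y ≤ αX; Ȳ = X · Pr{Y < X/α − 1} / Pr{Y < X/α} if Y < X/α; and Ȳ = X · Pr{Y > αX − 1} / Pr{Y > αX} if Y > αX. Then, surely, min{ 1/α, 1 − X/(X + ⌈X/α⌉ − 1) } ≤ Ȳ/X ≤ 1 + α + X^{-1}. -/

import Mathlib

open MeasureTheory ProbabilityTheory

theorem stmt12 {Ω : Type*} [MeasurableSpace Ω] (μ : Measure Ω) [IsProbabilityMeasure μ]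
    (X α : ℝ) (hX : 0 < X) (hα : 0 < α)
    (Y : Ω → ℕ) (hYmeas : Measurable Y)
    (hYlaw : Measure.map Y μ = poissonMeasure X.toNNReal)
    (Ybar : Ω → ℝ)
    (hYbar : ∀ ω, Ybar ω =
      if X / α ≤ (Y ω : ℝ) ∧ (Y ω : ℝ) ≤ α * X then (Y ω : ℝ)
      else if (Y ω : ℝ) < X / α then
        X * (μ {ω' | (Y ω' : ℝ) < X / α - 1}).toReal / (μ {ω' | (Y ω' : ℝ) < X / α}).toReal
      else
        X * (μ {ω' | α * X - 1 < (Y ω' : ℝ)}).toReal / (μ {ω' | α * X < (Y ω' : ℝ)}).toReal) :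
    ∀ ω, min (1 / α) (1 - X / (X + (⌈X / α⌉ : ℝ) - 1)) ≤ Ybar ω / X ∧
      Ybar ω / X ≤ 1 + α + X⁻¹ := by
  -- point masses
  set q : ℕ → ℝ := fun k => Real.exp (-X) * X ^ k / k.factorial with hqdef
  have hq : ∀ k : ℕ, μ {ω | Y ω = k} = ENNReal.ofReal (q k) := by
    intro k
    have h1 : {ω | Y ω = k} = Y ⁻¹' {k} := rfl
    rw [h1, ← Measure.map_apply hYmeas (measurableSet_singleton k), hYlaw,
      poissonMeasure_singleton]
    show ENNReal.ofReal (poissonPMFReal X.toNNReal k) = _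
    rw [poissonPMFReal, Real.coe_toNNReal _ hX.le]
  have hqpos : ∀ k, 0 < q k := fun k =>
    div_pos (mul_pos (Real.exp_pos _) (pow_pos hX k)) (Nat.cast_pos.mpr k.factorial_pos)
  have hrec : ∀ k : ℕ, q k * X = q (k + 1) * ((k : ℝ) + 1) := by
    intro k
    simp only [hqdef]
    have hfk : (k.factorial : ℝ) ≠ 0 := Nat.cast_ne_zero.mpr k.factorial_ne_zero
    have hfk1 : ((k + 1).factorial : ℝ) = ((k : ℝ) + 1) * k.factorial := by
      rw [Nat.factorial_succ]; push_cast; ring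
    rw [pow_succ, hfk1]
    have hk1 : ((k : ℝ) + 1) ≠ 0 := by positivity
    field_simp
  -- ceiling / floor bookkeeping
  have hceil_pos : (0 : ℤ) < ⌈X / α⌉ := Int.ceil_pos.mpr (div_pos hX hα)
  obtain ⟨mm, hmm⟩ : ∃ mm : ℕ, ⌈X / α⌉ = (mm : ℤ) + 1 :=
    ⟨(⌈X / α⌉ - 1).toNat, by omega⟩
  have hmmR : ((⌈X / α⌉ : ℤ) : ℝ) = (mm : ℝ) + 1 := by rw [hmm]; push_cast; ring
  have hfl : (0 : ℤ) ≤ ⌊α * X⌋ := Int.floor_nonneg.mpr (mul_pos hα hX).le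
  obtain ⟨nn, hnn⟩ : ∃ nn : ℕ, ⌊α * X⌋ = (nn : ℤ) := ⟨(⌊α * X⌋).toNat, by omega⟩
  have hnnR : (nn : ℝ) ≤ α * X := by
    have := Int.floor_le (α * X); rw [hnn] at this; exact_mod_cast this
  -- set identities
  have key1 : ∀ y : ℕ, ((y : ℝ) < X / α ↔ y < mm + 1) := by
    intro y
    constructor
    · intro h
      have : (y : ℤ) < ⌈X / α⌉ := Int.lt_ceil.mpr (by exact_mod_cast h)
      omega
    · intro h
      have : (y : ℤ) < ⌈X / α⌉ := by omega
      exact_mod_cast Int.lt_ceil.mp this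
  have key2 : ∀ y : ℕ, ((y : ℝ) < X / α - 1 ↔ y < mm) := by
    intro y
    have h1 : ((y : ℝ) < X / α - 1 ↔ ((y + 1 : ℕ) : ℝ) < X / α) := by
      push_cast; constructor <;> intro h <;> linarith
    rw [h1, key1 (y + 1)]
    omega
  have key3 : ∀ y : ℕ, (α * X < (y : ℝ) ↔ nn + 1 ≤ y) := by
    intro y
    constructor
    · intro h
      have : ⌊α * X⌋ < (y : ℤ) := Int.floor_lt.mpr (by exact_mod_cast h)
      omega
    · intro h
      have : ⌊α * X⌋ < (y : ℤ) := by omega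
      exact_mod_cast Int.floor_lt.mp this
  have key4 : ∀ y : ℕ, (α * X - 1 < (y : ℝ) ↔ nn ≤ y) := by
    intro y
    have h1 : (α * X - 1 < (y : ℝ) ↔ α * X < ((y + 1 : ℕ) : ℝ)) := by
      push_cast; constructor <;> intro h <;> linarith
    rw [h1, key3 (y + 1)]
    omega
  have hsetB : {ω' | (Y ω' : ℝ) < X / α} = {ω' | Y ω' < mm + 1} :=
    Set.ext fun ω' => key1 _
  have hsetA : {ω' | (Y ω' : ℝ) < X / α - 1} = {ω' | Y ω' < mm} :=
    Set.ext fun ω' => key2 _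
  have hsetC : {ω' | α * X < (Y ω' : ℝ)} = {ω' | nn + 1 ≤ Y ω'} :=
    Set.ext fun ω' => key3 _
  have hsetD : {ω' | α * X - 1 < (Y ω' : ℝ)} = {ω' | nn ≤ Y ω'} :=
    Set.ext fun ω' => key4 _
  -- measure decompositions
  have hBsplit : μ {ω' | Y ω' < mm + 1} = μ {ω' | Y ω' < mm} + ENNReal.ofReal (q mm) := by
    rw [show {ω' | Y ω' < mm + 1} = {ω' | Y ω' < mm} ∪ {ω' | Y ω' = mm} by
      ext ω'; simp only [Set.mem_setOf_eq, Set.mem_union]; omega]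
    rw [measure_union (Set.disjoint_left.mpr fun ω h1 h2 => by
        simp only [Set.mem_setOf_eq] at h1 h2; omega)
      (show MeasurableSet {ω' | Y ω' = mm} from hYmeas (measurableSet_singleton mm)), hq mm]
  have hDsplit : μ {ω' | nn ≤ Y ω'} = ENNReal.ofReal (q nn) + μ {ω' | nn + 1 ≤ Y ω'} := by
    rw [show {ω' | nn ≤ Y ω'} = {ω' | Y ω' = nn} ∪ {ω' | nn + 1 ≤ Y ω'} by
      ext ω'; simp only [Set.mem_setOf_eq, Set.mem_union]; omega]
    rw [measure_union (Set.disjoint_left.mpr fun ω h1 h2 => by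
        simp only [Set.mem_setOf_eq] at h1 h2; omega)
      (show MeasurableSet {ω' | nn + 1 ≤ Y ω'} from hYmeas measurableSet_Ici), hq nn]
  set A : ℝ := (μ {ω' | Y ω' < mm}).toReal with hAdef
  set B : ℝ := (μ {ω' | Y ω' < mm + 1}).toReal with hBdef
  set C : ℝ := (μ {ω' | nn + 1 ≤ Y ω'}).toReal with hCdef
  set D : ℝ := (μ {ω' | nn ≤ Y ω'}).toReal with hDdef
  have hAnn : 0 ≤ A := ENNReal.toReal_nonneg
  have hCnn : 0 ≤ C := ENNReal.toReal_nonneg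
  have hBA : B = A + q mm := by
    rw [hBdef, hBsplit, ENNReal.toReal_add (measure_ne_top μ _) ENNReal.ofReal_ne_top,
      ENNReal.toReal_ofReal (hqpos mm).le, hAdef]
  have hDC : D = q nn + C := by
    rw [hDdef, hDsplit, ENNReal.toReal_add ENNReal.ofReal_ne_top (measure_ne_top μ _),
      ENNReal.toReal_ofReal (hqpos nn).le, hCdef]
  have hBpos : 0 < B := by
    have hsub : {ω | Y ω = 0} ⊆ {ω' | Y ω' < mm + 1} := fun ω h => by
      simp only [Set.mem_setOf_eq] at *; omega
    have hlt : 0 < μ {ω' | Y ω' < mm + 1} :=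
      lt_of_lt_of_le (ENNReal.ofReal_pos.mpr (hqpos 0)) ((hq 0) ▸ measure_mono hsub)
    exact ENNReal.toReal_pos hlt.ne' (measure_ne_top μ _)
  have hCq : q (nn + 1) ≤ C := by
    have hsub : {ω | Y ω = nn + 1} ⊆ {ω' | nn + 1 ≤ Y ω'} := fun ω h => by
      simp only [Set.mem_setOf_eq] at *; omega
    have h := measure_mono (μ := μ) hsub
    rw [hq (nn + 1)] at h
    calc q (nn + 1) = (ENNReal.ofReal (q (nn + 1))).toReal :=
          (ENNReal.toReal_ofReal (hqpos _).le).symm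
      _ ≤ C := ENNReal.toReal_mono (measure_ne_top μ _) h
  have hCpos : 0 < C := lt_of_lt_of_le (hqpos (nn + 1)) hCq
  have hAX : (mm : ℝ) * q mm ≤ A * X := by
    rcases Nat.eq_zero_or_pos mm with h0 | hpos
    · rw [h0]; simpa using mul_nonneg hAnn hX.le
    · obtain ⟨kk, hkk⟩ : ∃ kk, mm = kk + 1 := ⟨mm - 1, by omega⟩
      have hsub : {ω | Y ω = kk} ⊆ {ω' | Y ω' < mm} := fun ω h => by
        simp only [Set.mem_setOf_eq] at *; omega
      have h := measure_mono (μ := μ) hsub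
      rw [hq kk] at h
      have hAk : q kk ≤ A := by
        calc q kk = (ENNReal.ofReal (q kk)).toReal := (ENNReal.toReal_ofReal (hqpos _).le).symm
          _ ≤ A := ENNReal.toReal_mono (measure_ne_top μ _) h
      have hr := hrec kk
      rw [hkk]
      push_cast
      nlinarith [mul_le_mul_of_nonneg_right hAk hX.le]
  -- final estimates
  intro ω
  rw [hYbar ω, hsetA, hsetB, hsetC, hsetD]
  have hXinv : 0 < X⁻¹ := inv_pos.mpr hX
  split_ifs with h1 h2
  · -- no truncation
    constructor
    · refine le_trans (min_le_left _ _) ?_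
      rw [div_le_div_iff₀ hα hX]
      have := (div_le_iff₀ hα).mp h1.1
      linarith
    · have hYa : (Y ω : ℝ) / X ≤ α := (div_le_iff₀ hX).mpr (by linarith [h1.2])
      linarith
  · -- lower truncation
    have hval : X * A / B / X = A / B := by
      field_simp
    rw [hval]
    constructor
    · refine le_trans (min_le_right _ _) ?_
      rw [hmmR]
      have hXm : 0 < X + (mm : ℝ) := by positivity
      have h5 : 1 - X / (X + (mm : ℝ) + 1 - 1) = (mm : ℝ) / (X + mm) := by
        rw [show X + (mm : ℝ) + 1 - 1 = X + mm by ring, eq_div_iff hXm.ne', sub_mul,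
          div_mul_cancel₀ X hXm.ne']
        ring
      rw [show X + ((mm : ℝ) + 1) - 1 = X + (mm : ℝ) + 1 - 1 by ring, h5]
      rw [div_le_div_iff₀ hXm hBpos]
      have hB' : (mm : ℝ) * B = mm * A + mm * q mm := by rw [hBA]; ring
      have hexp : A * (X + (mm : ℝ)) = A * X + (mm : ℝ) * A := by ring
      linarith [hAX, hB', hexp]
    · have hAB : A / B ≤ 1 := by
        rw [div_le_one hBpos, hBA]
        linarith [hqpos mm]
      linarith
  · -- upper truncation
    have hval : X * D / C / X = D / C := by
      field_simp
    rw [hval]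
    have hDCge : C ≤ D := by rw [hDC]; linarith [hqpos nn]
    constructor
    · refine le_trans (min_le_right _ _) ?_
      rw [hmmR]
      have hXm : 0 < X + ((mm : ℝ) + 1) - 1 := by push_cast; linarith
      have h6 : X / (X + ((mm : ℝ) + 1) - 1) ≥ 0 := by positivity
      have h7 : (1 : ℝ) ≤ D / C := (one_le_div hCpos).mpr hDCge
      linarith
    · rw [div_le_iff₀ hCpos, hDC]
      have h2' : q nn * X ≤ C * ((nn : ℝ) + 1) := by
        rw [hrec nn]
        exact mul_le_mul_of_nonneg_right hCq (by positivity)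
      have h3 : C * ((nn : ℝ) + 1) ≤ C * (α * X + 1) :=
        mul_le_mul_of_nonneg_left (by linarith) hCnn
      have h4 : q nn ≤ C * (α * X + 1) / X := by
        rw [le_div_iff₀ hX]; linarith
      have h8 : C * (α * X + 1) / X = C * α + C * X⁻¹ := by
        field_simp
      have h9 : (1 + α + X⁻¹) * C = C + (C * α + C * X⁻¹) := by ring
      linarith [h4, h8, h9]
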